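/- arXiv:1709.05949 — 5 statements merged into one kernel-verified Lean document; each statement's English description precedes it below -/
import Mathlib

section
/- The only positive integer n such that n divides 2^n - 1 is n = 1. -/
theorem only_one_divides_two_pow_sub_one (n : ℕ) (hn : 0 < n) (h : n ∣ 2 ^ n - 1) : n = 1 := by
  by_contra hne
  have hn1 : 1 < n := lt_of_le_of_ne hn (Ne.symm hne)
  set p := n.minFac with hp
  have hpp : p.Prime := Nat.minFac_prime (by omega)
  have hpn : p ∣ n := Nat.minFac_dvd n
  have hpd : p ∣ 2 ^ n - 1 := hpn.trans h
  have hpow : (1:ℕ) ≤ 2 ^ n := Nat.one_le_two_pow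
  -- p is odd
  have hodd : p ≠ 2 := by
    intro h2
    have h1 : (2:ℕ) ∣ 2 ^ n := dvd_pow_self 2 hn.ne'
    have : (2:ℕ) ∣ 2 ^ n - (2 ^ n - 1) := Nat.dvd_sub h1 (h2 ▸ hpd)
    omega
  haveI : Fact p.Prime := ⟨hpp⟩
  -- 2^n = 1 in ZMod p
  have h2n : (2 : ZMod p) ^ n = 1 := by
    have : ((2 ^ n - 1 : ℕ) : ZMod p) = 0 := (ZMod.natCast_eq_zero_iff _ _).mpr hpd
    have := Nat.cast_sub hpow (R := ZMod p) ▸ this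
    push_cast at this
    linear_combination this
  have hd1 : orderOf (2 : ZMod p) ∣ n := orderOf_dvd_of_pow_eq_one h2n
  have h2ne : (2 : ZMod p) ≠ 0 := by
    intro h0
    have : (p : ℕ) ∣ 2 := (ZMod.natCast_eq_zero_iff 2 p).mp (by exact_mod_cast h0)
    exact hodd ((Nat.prime_dvd_prime_iff_eq hpp Nat.prime_two).mp this)
  have hd2 : orderOf (2 : ZMod p) ∣ p - 1 :=
    orderOf_dvd_of_pow_eq_one (ZMod.pow_card_sub_one_eq_one h2ne)
  -- gcd(n, p-1) = 1
  have hgcd : Nat.gcd n (p - 1) = 1 := by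
    by_contra hg
    obtain ⟨q, hq, hqd⟩ := Nat.exists_prime_and_dvd hg
    have hq1 : q ∣ n := hqd.trans (Nat.gcd_dvd_left _ _)
    have hq2 : q ∣ p - 1 := hqd.trans (Nat.gcd_dvd_right _ _)
    have hle : p ≤ q := Nat.minFac_le_of_dvd hq.two_le hq1
    have : q ≤ p - 1 := Nat.le_of_dvd (Nat.sub_pos_of_lt hpp.one_lt) hq2
    have h2p := hpp.two_le
    omega
  have hd : orderOf (2 : ZMod p) ∣ 1 := by have h' := Nat.dvd_gcd hd1 hd2; rw [hgcd] at h'; exact h'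
  have : (2 : ZMod p) = 1 := orderOf_eq_one_iff.mp (Nat.dvd_one.mp hd)
  have : ((1:ℕ) : ZMod p) = 0 := by
    have : (2 : ZMod p) - 1 = 0 := by rw [this]; ring
    push_cast; linear_combination this
  have := (ZMod.natCast_eq_zero_iff 1 p).mp this
  simp at this
  exact hpp.one_lt.ne' this
end

section
/- Let G be a finite group and g, x ∈ G elements of the same order such that x * g * x⁻¹ = g^2. Then g = 1. -/
lemma nt_aux (m : ℕ) (hm : 0 < m) (hdvd : m ∣ 2 ^ m - 1) : m = 1 := by
  by_contra hne
  set p := m.minFac with hp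
  have hpp : p.Prime := Nat.minFac_prime hne
  haveI : Fact p.Prime := ⟨hpp⟩
  have hpm : p ∣ m := Nat.minFac_dvd m
  have hpd : p ∣ 2 ^ m - 1 := hpm.trans hdvd
  have h1 : 1 ≤ 2 ^ m := Nat.one_le_two_pow
  have hpow : (2 : ZMod p) ^ m = 1 := by
    have h0 : ((2 ^ m - 1 : ℕ) : ZMod p) = 0 := (ZMod.natCast_eq_zero_iff _ _).2 hpd
    have e : (2 ^ m : ℕ) = (2 ^ m - 1) + 1 := by omega
    have h2 : ((2 ^ m : ℕ) : ZMod p) = ((2 ^ m - 1 : ℕ) : ZMod p) + 1 := by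
      rw [e]; push_cast; ring
    rw [h0, zero_add] at h2
    push_cast at h2
    exact h2
  have hp2 : p ≠ 2 := by
    intro h2
    rw [h2] at hpd
    have hodd : Odd (2 ^ m - 1) := by
      have : 2 ∣ 2 ^ m := dvd_pow_self 2 hm.ne'
      rcases this with ⟨k, hk⟩
      exact ⟨k - 1, by omega⟩
    exact (Nat.not_even_iff_odd.mpr hodd) ((even_iff_two_dvd).2 hpd)
  have h20 : (2 : ZMod p) ≠ 0 := by
    intro h0
    have := (ZMod.natCast_eq_zero_iff 2 p).1 (by exact_mod_cast h0)
    exact hp2 ((Nat.prime_dvd_prime_iff_eq hpp Nat.prime_two).1 this)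
  set d := orderOf (2 : ZMod p) with hd
  have hdm : d ∣ m := orderOf_dvd_of_pow_eq_one hpow
  have hdp : d ∣ p - 1 := orderOf_dvd_of_pow_eq_one (ZMod.pow_card_sub_one_eq_one h20)
  have hd1 : d ≠ 1 := by
    intro h1'
    have : (2 : ZMod p) = 1 := by
      have := pow_orderOf_eq_one (2 : ZMod p)
      rwa [← hd, h1', pow_one] at this
    have e1 : (1 : ZMod p) = 0 := by linear_combination this
    have e2 : ((1 : ℕ) : ZMod p) = 0 := by exact_mod_cast e1
    have := (ZMod.natCast_eq_zero_iff 1 p).1 e2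
    have hle := Nat.le_of_dvd one_pos this
    have := hpp.two_le
    omega
  have hdpos : 2 ≤ d := by
    rcases Nat.eq_zero_or_pos d with h0 | h0
    · exfalso
      have := Nat.eq_zero_of_zero_dvd (h0 ▸ hdm)
      omega
    · omega
  have hple : p ≤ d := Nat.minFac_le_of_dvd hdpos hdm
  have : d ≤ p - 1 := Nat.le_of_dvd (by have := hpp.two_le; omega) hdp
  omega

theorem conj_to_square_trivial {G : Type} [Group G] [Finite G] (g x : G)
    (hord : orderOf x = orderOf g) (h : x * g * x⁻¹ = g ^ 2) : g = 1 := by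
  have key : ∀ n : ℕ, x ^ n * g * (x ^ n)⁻¹ = g ^ (2 ^ n) := by
    intro n
    induction n with
    | zero => simp
    | succ n ih =>
      have e : x ^ (n+1) * g * (x ^ (n+1))⁻¹ = x * (x ^ n * g * (x ^ n)⁻¹) * x⁻¹ := by
        group
      rw [e, ih, ← conj_pow, h, ← pow_mul, pow_succ, mul_comm]
  set m := orderOf g with hm
  have hmpos : 0 < m := by
    have : ∀ a : G, IsOfFinOrder a := fun a => isOfFinOrder_of_finite a
    exact (this g).orderOf_pos
  have hx : x ^ m = 1 := by rw [← hord]; exact pow_orderOf_eq_one x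
  have hg : g = g ^ (2 ^ m) := by
    have := key m
    rwa [hx, one_mul, inv_one, mul_one] at this
  have hsub : g ^ (2 ^ m - 1) = 1 := by
    have h1 : 1 ≤ 2 ^ m := Nat.one_le_two_pow
    have h2 : g ^ ((2 ^ m - 1) + 1) = g := by rw [Nat.sub_add_cancel h1, ← hg]
    have h3 : g ^ (2 ^ m - 1) * g = 1 * g := by rw [← pow_succ, h2, one_mul]
    exact mul_right_cancel h3
  have hdvd : m ∣ 2 ^ m - 1 := orderOf_dvd_of_pow_eq_one hsub
  have := nt_aux m hmpos hdvd
  exact orderOf_eq_one_iff.mp this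
end

section
/- Every finitely generated infinite group has a just-infinite quotient, i.e. there exists a normal subgroup N of G such that G/N is infinite and every nontrivial normal subgroup of G/N has finite index. -/
/-- A finite set each of whose elements lies in some member of a chain of subgroups
lies entirely in a single member of the chain. -/
lemma finset_subset_chain_mem {G : Type} [Group G] {c : Set (Subgroup G)}
    (hc : IsChain (· ≤ ·) c) {y : Subgroup G} (hy : y ∈ c) (T : Finset G)
    (hT : ∀ t ∈ T, ∃ K ∈ c, t ∈ K) : ∃ K ∈ c, ∀ t ∈ T, t ∈ K := by
  classical
  induction T using Finset.induction_on with
  | empty => exact ⟨y, hy, by simp⟩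
  | @insert a T ha ih =>
    obtain ⟨K, hKc, hK⟩ := ih (fun t ht => hT t (Finset.mem_insert_of_mem ht))
    obtain ⟨K', hK'c, haK'⟩ := hT a (Finset.mem_insert_self a T)
    rcases eq_or_ne K K' with rfl | hne
    · exact ⟨K, hKc, fun t ht => by
        rcases Finset.mem_insert.1 ht with rfl | ht
        · exact haK'
        · exact hK t ht⟩
    rcases hc hKc hK'c hne with h | h
    · exact ⟨K', hK'c, fun t ht => by
        rcases Finset.mem_insert.1 ht with rfl | ht
        · exact haK'
        · exact h (hK t ht)⟩
    · exact ⟨K, hKc, fun t ht => by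
        rcases Finset.mem_insert.1 ht with rfl | ht
        · exact h haK'
        · exact hK t ht⟩

/-- Every finitely generated infinite group has a just-infinite quotient. -/
theorem exists_just_infinite_quotient {G : Type} [Group G] (hfg : Group.FG G)
    (hinf : Infinite G) :
    ∃ (N : Subgroup G) (_ : N.Normal),
      Infinite (G ⧸ N) ∧
      ∀ M : Subgroup (G ⧸ N), M.Normal → M ≠ ⊥ → M.FiniteIndex := by
  classical
  set S : Set (Subgroup G) := {N | N.Normal ∧ Infinite (G ⧸ N)} with hS
  have hbot : (⊥ : Subgroup G) ∈ S := by
    refine ⟨inferInstance, ?_⟩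
    exact (Equiv.infinite_iff (QuotientGroup.quotientBot (G := G)).toEquiv).mpr hinf
  -- chain condition
  have hchain : ∀ c ⊆ S, IsChain (· ≤ ·) c → ∀ y ∈ c, ∃ ub ∈ S, ∀ z ∈ c, z ≤ ub := by
    intro c hcS hc y hy
    classical
    set N : Subgroup G := sSup c with hNdef
    have hdir : DirectedOn (· ≤ ·) c := hc.directedOn
    have hmem : ∀ x : G, x ∈ N ↔ ∃ K ∈ c, x ∈ K := by
      intro x
      rw [hNdef, Subgroup.mem_sSup_of_directedOn ⟨y, hy⟩ hdir]
    have hNnormal : N.Normal := by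
      constructor
      intro n hn g
      obtain ⟨K, hKc, hnK⟩ := (hmem n).1 hn
      exact (hmem _).2 ⟨K, hKc, (hcS hKc).1.conj_mem n hnK g⟩
    refine ⟨N, ⟨hNnormal, ?_⟩, fun z hz => le_sSup hz⟩
    -- show G ⧸ N is infinite
    by_contra hninf
    have hfin : Finite (G ⧸ N) := not_infinite_iff_finite.mp hninf
    haveI : N.FiniteIndex := ⟨N.index_ne_zero_of_finite⟩
    haveI : Group.FG G := hfg
    haveI : Group.FG N := Subgroup.fg_of_index_ne_zero N
    have hNfg : N.FG := (Group.fg_iff_subgroup_fg N).1 inferInstance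
    obtain ⟨T, hT⟩ := hNfg
    obtain ⟨K, hKc, hK⟩ := finset_subset_chain_mem hc hy T
      (fun t ht => (hmem t).1 (hT ▸ Subgroup.subset_closure ht))
    have hNK : N ≤ K := by
      rw [← hT, Subgroup.closure_le]
      intro t ht
      exact hK t ht
    have hKN : K ≤ N := le_sSup hKc
    have : K = N := le_antisymm hKN hNK
    have hKinf : Infinite (G ⧸ K) := (hcS hKc).2
    rw [this] at hKinf
    exact hninf hKinf
  -- Zorn's lemma
  obtain ⟨N, -, hNmax⟩ := zorn_le_nonempty₀ S hchain ⊥ hbot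
  obtain ⟨hNnormal, hNinf⟩ := hNmax.prop
  refine ⟨N, hNnormal, hNinf, fun M hMnormal hMne => ?_⟩
  set N' : Subgroup G := M.comap (QuotientGroup.mk' N) with hN'
  have hN'normal : N'.Normal := hMnormal.comap _
  have hle : N ≤ N' := by
    intro x hx
    simp only [hN', Subgroup.mem_comap]
    have : (QuotientGroup.mk' N) x = 1 := (QuotientGroup.eq_one_iff x).2 hx
    rw [this]; exact M.one_mem
  have hindex : N'.index = M.index :=
    Subgroup.index_comap_of_surjective M (QuotientGroup.mk'_surjective N)
  -- N' is strictly bigger than N since M ≠ ⊥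
  have hne : N' ≠ N := by
    intro h
    apply hMne
    ext x
    simp only [Subgroup.mem_bot]
    constructor
    · intro hx
      obtain ⟨g, rfl⟩ := QuotientGroup.mk'_surjective N x
      have : g ∈ N' := by simpa [hN', Subgroup.mem_comap] using hx
      rw [h] at this
      exact (QuotientGroup.eq_one_iff g).2 this
    · rintro rfl; exact M.one_mem
  -- maximality: N' ∉ S, so G ⧸ N' is not infinite
  have hN'notS : N' ∉ S := fun hmem => hne (le_antisymm (hNmax.2 hmem hle) hle)
  have : ¬ Infinite (G ⧸ N') := fun h => hN'notS ⟨hN'normal, h⟩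
  have hfin : Finite (G ⧸ N') := not_infinite_iff_finite.mp this
  refine ⟨?_⟩
  rw [← hindex]
  exact N'.index_ne_zero_of_finite
end

section
/- Let G be a hereditarily just-infinite group (every finite index subgroup of G is just-infinite, in particular G itself is just-infinite). If G is not residually finite, then the intersection G^(∞) of all finite index subgroups of G is a simple group of finite index in G. -/
/-- A group is just-infinite if it is infinite and every nontrivial normal
subgroup has finite index. -/
def JustInfinite (G : Type) [Group G] : Prop :=
  Infinite G ∧ ∀ N : Subgroup G, N.Normal → N ≠ ⊥ → N.FiniteIndex

/-- The finite residual: the intersection of all finite-index subgroups. -/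
def finiteResidual (G : Type) [Group G] : Subgroup G :=
  ⨅ (H : Subgroup G) (_ : H.FiniteIndex), H

lemma finiteResidual_le {G : Type} [Group G] (H : Subgroup G) (hH : H.FiniteIndex) :
    finiteResidual G ≤ H :=
  iInf_le_of_le H (iInf_le _ hH)

lemma finiteResidual_normal {G : Type} [Group G] : (finiteResidual G).Normal := by
  constructor
  intro n hn g
  rw [finiteResidual, Subgroup.mem_iInf]
  intro H
  rw [Subgroup.mem_iInf]
  intro hH
  have hK : (H.comap ((MulAut.conj g).toMonoidHom)).FiniteIndex := by
    constructor
    rw [Subgroup.index_comap, MonoidHom.range_eq_top_of_surjective _ (MulAut.conj g).surjective,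
      Subgroup.relIndex_top_right]
    exact hH.index_ne_zero
  have := finiteResidual_le _ hK hn
  simpa [Subgroup.mem_comap] using this

/-- If a hereditarily just-infinite group is not residually finite, then its finite
residual is simple and of finite index. -/
theorem finiteResidual_simple_of_hereditarily_just_infinite {G : Type} [Group G]
    (hhji : ∀ H : Subgroup G, H.FiniteIndex → JustInfinite H)
    (hnrf : finiteResidual G ≠ ⊥) :
    (finiteResidual G).FiniteIndex ∧ IsSimpleGroup (finiteResidual G) := by
  set R := finiteResidual G with hRdef
  have htop : (⊤ : Subgroup G).FiniteIndex := ⟨by simp⟩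
  -- G is just infinite (via ⊤)
  obtain ⟨-, hji⟩ := hhji ⊤ htop
  -- R has finite index
  have hRnormal : R.Normal := finiteResidual_normal
  have hRsub_normal : (R.subgroupOf ⊤).Normal := hRnormal.subgroupOf ⊤
  have hRsub_ne : R.subgroupOf ⊤ ≠ ⊥ := by
    intro h
    apply hnrf
    rw [eq_bot_iff]
    intro x hx
    have : (⟨x, Subgroup.mem_top x⟩ : (⊤ : Subgroup G)) ∈ R.subgroupOf ⊤ := hx
    rw [h, Subgroup.mem_bot] at this
    simpa [Subgroup.mem_bot] using congrArg Subtype.val this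
  have hfi := hji _ hRsub_normal hRsub_ne
  have hRfi : R.FiniteIndex := by
    constructor
    have := hfi.index_ne_zero
    rwa [show (R.subgroupOf ⊤).index = R.relIndex ⊤ from rfl,
      Subgroup.relIndex_top_right] at this
  refine ⟨hRfi, ?_⟩
  obtain ⟨-, hjiR⟩ := hhji R hRfi
  have hnontriv : Nontrivial R := by
    rcases R.bot_or_nontrivial with h | h
    · exact absurd h hnrf
    · exact h
  refine ⟨fun N hN => ?_⟩
  rcases eq_or_ne N ⊥ with h | h
  · exact Or.inl h
  · right
    have hNfi := hjiR N hN h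
    set M := N.map R.subtype with hM
    have hMle : M ≤ R := Subgroup.map_subtype_le N
    have hMrel : M.relIndex R = N.index := by
      rw [Subgroup.relIndex, Subgroup.subgroupOf, hM,
        Subgroup.comap_map_eq_self_of_injective R.subtype_injective]
    have hMfi : M.FiniteIndex := by
      constructor
      rw [← Subgroup.relIndex_mul_index hMle, hMrel]
      exact Nat.mul_ne_zero hNfi.index_ne_zero hRfi.index_ne_zero
    have hRleM : R ≤ M := finiteResidual_le _ hMfi
    have hMR : M = R := le_antisymm hMle hRleM
    rw [Subgroup.eq_top_iff']
    intro x
    have hx : (x : G) ∈ M := hMR.symm ▸ x.2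
    obtain ⟨y, hy, hyx⟩ := Subgroup.mem_map.mp hx
    rwa [show y = x from Subtype.ext hyx] at hy
end

section
/- For a vertex-transitive automorphism group Γ of a connected locally finite graph and any vertex v and any n ≥ 0: the pointwise stabilizer of the n-ball around v is trivial if and only if it is contained in the pointwise stabilizer of the (n+1)-ball around v. -/
/-- For a vertex-transitive automorphism group of a connected locally finite graph,
the pointwise stabilizer of the n-ball around a vertex v is trivial iff it is
contained in the pointwise stabilizer of the (n+1)-ball. -/
theorem ball_stabilizer_trivial_iff {V Γ : Type} [Group Γ] [MulAction Γ V]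
    [FaithfulSMul Γ V] (G : SimpleGraph V) (hconn : G.Connected)
    (hlf : G.LocallyFinite)
    (hadj : ∀ (g : Γ) (u w : V), G.Adj u w → G.Adj (g • u) (g • w))
    (htrans : ∀ u w : V, ∃ g : Γ, g • u = w)
    (v : V) (n : ℕ) :
    (⨅ w ∈ {w : V | G.dist v w ≤ n}, MulAction.stabilizer Γ w) = ⊥ ↔
    (⨅ w ∈ {w : V | G.dist v w ≤ n}, MulAction.stabilizer Γ w) ≤
      ⨅ w ∈ {w : V | G.dist v w ≤ n + 1}, MulAction.stabilizer Γ w := by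
  -- distance invariance under the action
  have hdist : ∀ (g : Γ) (u w : V), G.dist (g • u) (g • w) = G.dist u w := by
    have hle : ∀ (g : Γ) (u w : V), G.dist (g • u) (g • w) ≤ G.dist u w := by
      intro g u w
      obtain ⟨p, hp⟩ := hconn.exists_walk_length_eq_dist u w
      have := SimpleGraph.dist_le
        (p.map ⟨fun x => g • x, fun h => hadj g _ _ h⟩)
      simpa [hp] using this
    intro g u w
    refine le_antisymm (hle g u w) ?_
    have := hle g⁻¹ (g • u) (g • w)
    simpa using this
  -- membership characterization
  have hmem : ∀ (m : ℕ) (u : V) (γ : Γ),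
      γ ∈ (⨅ w ∈ {w : V | G.dist u w ≤ m}, MulAction.stabilizer Γ w) ↔
      ∀ w, G.dist u w ≤ m → γ • w = w := by
    intro m u γ
    simp [Subgroup.mem_iInf, MulAction.mem_stabilizer_iff]
  constructor
  · intro h
    rw [h]
    exact bot_le
  · intro H
    -- transport the hypothesis to every vertex
    have Hall : ∀ u : V, ∀ γ : Γ, (∀ w, G.dist u w ≤ n → γ • w = w) →
        ∀ w, G.dist u w ≤ n + 1 → γ • w = w := by
      intro u γ hγ w hw
      obtain ⟨g, hg⟩ := htrans v u
      have hγ' : g⁻¹ * γ * g ∈ (⨅ w ∈ {w : V | G.dist v w ≤ n}, MulAction.stabilizer Γ w) := by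
        rw [hmem]
        intro x hx
        have hx' : G.dist u (g • x) ≤ n := by
          rw [← hg, hdist]; exact hx
        have := hγ (g • x) hx'
        simp [mul_smul, this]
      have hfix := H hγ'
      rw [hmem] at hfix
      have hw' : G.dist v (g⁻¹ • w) ≤ n + 1 := by
        have : G.dist (g • v) (g • (g⁻¹ • w)) ≤ n + 1 := by simpa [hg] using hw
        rwa [hdist] at this
      have h1 := hfix (g⁻¹ • w) hw'
      have h2 : g⁻¹ • (γ • w) = g⁻¹ • w := by
        simpa [mul_smul] using h1
      exact smul_left_cancel g⁻¹ h2
    -- propagate along one edge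
    have step : ∀ (x y : V) (γ : Γ), G.Adj x y → (∀ w, G.dist x w ≤ n → γ • w = w) →
        ∀ w, G.dist y w ≤ n → γ • w = w := by
      intro x y γ hxy hx w hw
      apply Hall x γ hx
      calc G.dist x w ≤ G.dist x y + G.dist y w := hconn.dist_triangle
        _ ≤ 1 + n := by
            gcongr
            exact SimpleGraph.dist_le hxy.toWalk
        _ = n + 1 := by omega
    -- propagate along walks
    have key : ∀ (a b : V) (p : G.Walk a b) (γ : Γ),
        (∀ w, G.dist a w ≤ n → γ • w = w) → ∀ w, G.dist b w ≤ n → γ • w = w := by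
      intro a b p
      induction p with
      | nil => exact fun γ h => h
      | cons h p ih => exact fun γ ha => ih γ (step _ _ γ h ha)
    rw [Subgroup.eq_bot_iff_forall]
    intro γ hγ
    rw [hmem] at hγ
    refine FaithfulSMul.eq_of_smul_eq_smul (α := V) (fun u => ?_)
    obtain ⟨p⟩ := hconn v u
    simpa using key v u p γ hγ u (by simp [SimpleGraph.dist_self])
end
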